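/- For -2 ≤ λ ≤ 1, the function r(t) = (1-λ) + 6λ t - 6λ t² is nonnegative for all t ∈ [0,1]. -/
import Mathlib


theorem stmt_12 (lam : ℝ) (h1 : -2 ≤ lam) (h2 : lam ≤ 1) :
    ∀ t ∈ Set.Icc (0:ℝ) 1, 0 ≤ (1 - lam) + 6 * lam * t - 6 * lam * t ^ 2 := by
  rintro t ⟨ht0, ht1⟩
  nlinarith [sq_nonneg (2*t - 1), mul_nonneg ht0 (sub_nonneg.2 ht1), sq_nonneg t, mul_nonneg (sub_nonneg.2 h2) (mul_nonneg ht0 (sub_nonneg.2 ht1)), mul_nonneg (by linarith : (0:ℝ) ≤ lam + 2) (sq_nonneg (2*t-1))]
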